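/- (Strong Representer Theorem.) Let X be a real Hilbert space, let φ_1, …, φ_n ∈ X, and let ψ̃_1, …, ψ̃_n ∈ X satisfy span{ψ̃_1, …, ψ̃_n} = span{φ_1, …, φ_n}. Let d be a positive integer, let f : Matrix (Fin d) (Fin n) ℝ → ℝ be any function, and let g_1, …, g_d : ℝ → ℝ be strictly monotonically increasing functions. Define h(τ_1, …, τ_d) = f((⟪τ_i, φ_j⟫)_{i,j}) + ∑_{i=1}^d g_i(‖τ_i‖) for τ_1, …, τ_d ∈ X. Then any minimizer (τ_1, …, τ_d) of h over X^d satisfies τ_i ∈ span{ψ̃_1, …, ψ̃_n} for every i = 1, …, d; that is, each optimal τ_i admits a representation τ_i = ∑_{j=1}^n u_{ij} ψ̃_j with real coefficients u_{ij}. -/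

import Mathlib

open scoped RealInnerProductSpace

/-- Strong Representer Theorem: any minimizer of the regularized objective has each
component in the span of `ψ̃_1, …, ψ̃_n`. -/
theorem stmt5 {X : Type*}
    [NormedAddCommGroup X] [InnerProductSpace ℝ X] [CompleteSpace X]
    {n d : ℕ} (hd : 0 < d) (φ ψ : Fin n → X)
    (hspan : Submodule.span ℝ (Set.range ψ) = Submodule.span ℝ (Set.range φ))
    (f : Matrix (Fin d) (Fin n) ℝ → ℝ)
    (g : Fin d → ℝ → ℝ) (hg : ∀ i, StrictMono (g i))
    (h : (Fin d → X) → ℝ)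
    (hh : ∀ τ : Fin d → X,
      h τ = f (Matrix.of fun i j => ⟪τ i, φ j⟫) + ∑ i : Fin d, g i ‖τ i‖)
    (τ : Fin d → X) (hmin : ∀ τ' : Fin d → X, h τ ≤ h τ') :
    ∀ i : Fin d, τ i ∈ Submodule.span ℝ (Set.range ψ) := by
  intro i
  rw [hspan]
  set K := Submodule.span ℝ (Set.range φ) with hK
  haveI : FiniteDimensional ℝ K := FiniteDimensional.span_of_finite ℝ (Set.finite_range φ)
  by_contra hi
  set τ' : Fin d → X := fun k => (K.orthogonalProjectionOnto (τ k) : X) with hτ'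
  have horth : ∀ k, τ k - τ' k ∈ Kᗮ := fun k =>
    Submodule.sub_starProjection_mem_orthogonal (K := K) (τ k)
  have hinner : ∀ k j, ⟪τ' k, φ j⟫ = ⟪τ k, φ j⟫ := by
    intro k j
    have hφ : φ j ∈ K := Submodule.subset_span ⟨j, rfl⟩
    have h0 : ⟪τ k - τ' k, φ j⟫ = 0 := by
      rw [real_inner_comm]; exact (horth k) _ hφ
    rw [inner_sub_left] at h0
    linarith
  have hpyth : ∀ k, ‖τ k‖ ^ 2 = ‖τ' k‖ ^ 2 + ‖τ k - τ' k‖ ^ 2 := by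
    intro k
    have h0 : ⟪τ' k, τ k - τ' k⟫ = 0 :=
      (horth k) _ (K.orthogonalProjectionOnto (τ k)).2
    have : τ k = τ' k + (τ k - τ' k) := by abel
    calc ‖τ k‖ ^ 2 = ‖τ' k + (τ k - τ' k)‖ ^ 2 := by rw [← this]
      _ = ‖τ' k‖ ^ 2 + 2 * ⟪τ' k, τ k - τ' k⟫ + ‖τ k - τ' k‖ ^ 2 := norm_add_sq_real _ _
      _ = ‖τ' k‖ ^ 2 + ‖τ k - τ' k‖ ^ 2 := by rw [h0]; ring
  have hle : ∀ k, ‖τ' k‖ ≤ ‖τ k‖ := by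
    intro k
    have : ‖τ' k‖ ^ 2 ≤ ‖τ k‖ ^ 2 := by
      rw [hpyth k]; nlinarith [sq_nonneg ‖τ k - τ' k‖]
    exact le_of_pow_le_pow_left₀ two_ne_zero (norm_nonneg _) (by simpa using this)
  have hlt : ‖τ' i‖ < ‖τ i‖ := by
    have hne : τ i - τ' i ≠ 0 := by
      intro h0
      apply hi
      have : τ i = τ' i := by
        have := sub_eq_zero.mp h0
        exact this
      rw [this]
      exact (K.orthogonalProjectionOnto (τ i)).2
    have : ‖τ' i‖ ^ 2 < ‖τ i‖ ^ 2 := by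
      rw [hpyth i]
      have : 0 < ‖τ i - τ' i‖ ^ 2 := pow_pos (norm_pos_iff.mpr hne) 2
      linarith
    exact lt_of_pow_lt_pow_left₀ 2 (norm_nonneg _) this
  have hMeq : (Matrix.of fun k j => ⟪τ' k, φ j⟫) = (Matrix.of fun k j => ⟪τ k, φ j⟫) := by
    ext k j
    exact hinner k j
  have hsum : ∑ k : Fin d, g k ‖τ' k‖ < ∑ k : Fin d, g k ‖τ k‖ := by
    apply Finset.sum_lt_sum (fun k _ => (hg k).monotone (hle k))
    exact ⟨i, Finset.mem_univ i, (hg i) hlt⟩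
  have : h τ' < h τ := by
    rw [hh τ', hh τ, hMeq]
    linarith
  exact absurd (hmin τ') (not_le.mpr this)
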